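/- Suppose the synthetic covariates satisfy norm-recoverability. Define ell(beta) = (1/M) sum_{i=1}^M [log h_0^+ + <X_i*, beta> - exp(<X_i*, beta>) Y_i* h_0^+] and kappa = sup_beta ell(beta) (finite). For alpha, gamma > 0, the Cox adaptive catalytic prior pi(tau, beta) proportional to tau^{p+alpha-1} e^{-tau(kappa + 1/gamma)} e^{tau * ell(beta)} is proper: the double integral over tau in (0, infinity) and beta in R^p is finite. -/

import Mathlib

open MeasureTheory Real
open scoped RealInnerProductSpace BigOperators



private lemma cox_key (y t : ℝ) (hy : 0 < y) : t - Real.exp t * y ≤ -|t| + 4 / y := by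
  rcases le_or_gt 0 t with ht | ht
  · rw [abs_of_nonneg ht]
    have h1 : t/2 + 1 ≤ Real.exp (t/2) := Real.add_one_le_exp _
    have h2 : Real.exp t = Real.exp (t/2) * Real.exp (t/2) := by
      rw [← Real.exp_add]; ring_nf
    have h3 : (t/2+1)^2 ≤ Real.exp t := by rw [h2]; nlinarith
    have main : 2*t*y ≤ y^2 * Real.exp t + 4 := by
      nlinarith [sq_nonneg (t*y/2 - 2), sq_nonneg y,
        mul_le_mul_of_nonneg_left h3 (sq_nonneg y), mul_nonneg ht (sq_nonneg y)]
    have hdiff : (-t + 4/y) - (t - Real.exp t * y) = (y^2 * Real.exp t + 4 - 2*t*y)/y := by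
      field_simp; ring
    nlinarith [div_nonneg (by linarith : (0:ℝ) ≤ y^2 * Real.exp t + 4 - 2*t*y) hy.le]
  · have h1 : 0 < Real.exp t * y := by positivity
    have h2 : 0 < 4/y := by positivity
    rw [abs_of_neg ht]; linarith

private lemma cox_gamma_int (a r : ℝ) (ha : 0 < a) (hr : 0 < r) :
    IntegrableOn (fun t : ℝ => t ^ (a - 1) * Real.exp (-(r * t))) (Set.Ioi 0) := by
  have hG := Real.GammaIntegral_convergent ha
  have h1 := (integrableOn_Ioi_comp_mul_left_iff (fun x : ℝ => Real.exp (-x) * x ^ (a-1)) 0 hr).mpr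
    (by simpa using hG)
  refine IntegrableOn.congr_fun
    (f := fun t : ℝ => (r ^ (a-1))⁻¹ * (Real.exp (-(r*t)) * (r*t) ^ (a-1)))
    (h1.const_mul _) (fun t ht => ?_) measurableSet_Ioi
  have hrt : (r*t) ^ (a-1) = r^(a-1) * t^(a-1) := Real.mul_rpow hr.le (le_of_lt ht)
  have hne : r ^ (a-1) ≠ 0 := (Real.rpow_pos_of_pos hr _).ne'
  show (r ^ (a-1))⁻¹ * (Real.exp (-(r*t)) * (r*t) ^ (a-1)) = _
  rw [hrt]
  field_simp

private lemma cox_F_integrable (p : ℕ) (a c m : ℝ) (hpa : (p:ℝ) < a) (hc : 0 < c) (hm : 0 < m) :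
    Integrable
      (fun q : EuclideanSpace ℝ (Fin p) × ℝ =>
        q.2 ^ (a-1) * Real.exp (-((c + m * ‖q.1‖) * q.2)))
      ((volume : Measure (EuclideanSpace ℝ (Fin p))).prod
        ((volume : Measure ℝ).restrict (Set.Ioi 0))) := by
  have ha0 : 0 < a := lt_of_le_of_lt (Nat.cast_nonneg p) hpa
  have hrpos : ∀ β : EuclideanSpace ℝ (Fin p), 0 < c + m*‖β‖ := fun β => by positivity
  have hGmeas : AEStronglyMeasurable
      (fun q : EuclideanSpace ℝ (Fin p) × ℝ =>
        q.2 ^ (a-1) * Real.exp (-((c + m * ‖q.1‖) * q.2)))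
      ((volume : Measure (EuclideanSpace ℝ (Fin p))).prod
        ((volume : Measure ℝ).restrict (Set.Ioi 0))) :=
    Measurable.aestronglyMeasurable (by fun_prop)
  rw [integrable_prod_iff hGmeas]
  refine ⟨?_, ?_⟩
  · refine ae_of_all _ fun β => ?_
    exact cox_gamma_int a (c+m*‖β‖) ha0 (hrpos β)
  have hval : ∀ β : EuclideanSpace ℝ (Fin p),
      (∫ τ, ‖τ ^ (a-1) * Real.exp (-((c+m*‖β‖) * τ))‖ ∂((volume : Measure ℝ).restrict (Set.Ioi 0)))
      = (1/(c+m*‖β‖))^a * Real.Gamma a := by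
    intro β
    rw [setIntegral_congr_fun (g := fun τ : ℝ => τ ^ (a-1) * Real.exp (-((c+m*‖β‖) * τ)))
      measurableSet_Ioi (fun τ hτ =>
        norm_of_nonneg (mul_nonneg (Real.rpow_nonneg (le_of_lt hτ) _) (Real.exp_pos _).le))]
    exact Real.integral_rpow_mul_exp_neg_mul_Ioi ha0 (hrpos β)
  simp only [hval]
  set mm := min c m with hmm_def
  have hmm : 0 < mm := lt_min hc hm
  have hp : ((Module.finrank ℝ (EuclideanSpace ℝ (Fin p)) : ℝ)) < a := by
    rw [finrank_euclideanSpace_fin]; exact_mod_cast hpa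
  refine Integrable.mono' ((integrable_one_add_norm hp).const_mul ((1/mm)^a * Real.Gamma a))
    ?_ (ae_of_all _ fun β => ?_)
  · refine Continuous.aestronglyMeasurable ?_
    refine Continuous.mul ?_ continuous_const
    refine Continuous.rpow_const ?_ (fun β => Or.inr ha0.le)
    exact continuous_const.div (continuous_const.add (continuous_const.mul continuous_norm))
      (fun β => (hrpos β).ne')
  · have hΓ : 0 ≤ Real.Gamma a := Real.Gamma_nonneg_of_nonneg ha0.le
    rw [norm_of_nonneg (mul_nonneg (Real.rpow_nonneg (by positivity) _) hΓ)]
    have h6 : mm * (1+‖β‖) ≤ c + m*‖β‖ := by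
      have h61 : mm ≤ c := min_le_left _ _
      have h62 : mm * ‖β‖ ≤ m * ‖β‖ := mul_le_mul_of_nonneg_right (min_le_right _ _) (norm_nonneg β)
      nlinarith [norm_nonneg β]
    have h7 : (1/(c+m*‖β‖)) ≤ 1/(mm*(1+‖β‖)) :=
      one_div_le_one_div_of_le (by positivity) h6
    have h8 : (1/(c+m*‖β‖))^a ≤ (1/(mm*(1+‖β‖)))^a :=
      Real.rpow_le_rpow (by positivity) h7 ha0.le
    have h9 : (1/(mm*(1+‖β‖)))^a = (1/mm)^a * (1+‖β‖)^(-a) := by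
      rw [Real.rpow_neg (by positivity), one_div, one_div, mul_inv,
        Real.mul_rpow (by positivity) (by positivity), Real.inv_rpow (by positivity), Real.inv_rpow (by positivity)]
    rw [h9] at h8
    have := mul_le_mul_of_nonneg_right h8 hΓ
    nlinarith [Real.rpow_nonneg (by positivity : (0:ℝ) ≤ 1+‖β‖) (-a),
      Real.rpow_nonneg (by positivity : (0:ℝ) ≤ 1/mm) a]

private lemma cox_F_on (p : ℕ) (a c m : ℝ) (hpa : (p:ℝ) < a) (hc : 0 < c) (hm : 0 < m) :
    IntegrableOn (fun q : ℝ × EuclideanSpace ℝ (Fin p) =>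
      q.1 ^ (a-1) * Real.exp (-((c + m * ‖q.2‖) * q.1)))
      (Set.Ioi (0:ℝ) ×ˢ (Set.univ : Set (EuclideanSpace ℝ (Fin p)))) := by
  rw [IntegrableOn, Measure.volume_eq_prod, ← Measure.prod_restrict, Measure.restrict_univ]
  exact (cox_F_integrable p a c m hpa hc hm).swap

theorem cox_adaptive_catalytic_prior_proper (p M : ℕ) (hM : 0 < M)
    (X : Fin M → EuclideanSpace ℝ (Fin p)) (Y : Fin M → ℝ) (hY : ∀ i, 0 < Y i)
    (h0 α γ c1 : ℝ) (hh0 : 0 < h0) (hα : 0 < α) (hγ : 0 < γ) (hc1 : 0 < c1)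
    (hnr : ∀ β : EuclideanSpace ℝ (Fin p),
      c1 * ‖β‖ ≤ (1 / (M : ℝ)) * ∑ i, |⟪X i, β⟫|)
    (ℓ : EuclideanSpace ℝ (Fin p) → ℝ)
    (hℓ : ∀ β, ℓ β =
      (1 / (M : ℝ)) * ∑ i, (Real.log h0 + ⟪X i, β⟫ - Real.exp ⟪X i, β⟫ * Y i * h0))
    (κ : ℝ) (hκ : κ = ⨆ β : EuclideanSpace ℝ (Fin p), ℓ β) :
    MeasureTheory.IntegrableOn
      (fun q : ℝ × EuclideanSpace ℝ (Fin p) =>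
        q.1 ^ ((p : ℝ) + α - 1) * Real.exp (-q.1 * (κ + 1 / γ)) * Real.exp (q.1 * ℓ q.2))
      (Set.Ioi (0 : ℝ) ×ˢ (Set.univ : Set (EuclideanSpace ℝ (Fin p)))) := by
  have hM0 : (0:ℝ) < M := Nat.cast_pos.mpr hM
  -- continuity of ℓ
  have hℓc : Continuous ℓ := by
    have heq : ℓ = fun β : EuclideanSpace ℝ (Fin p) =>
        (1 / (M : ℝ)) * ∑ i, (Real.log h0 + ⟪X i, β⟫ - Real.exp ⟪X i, β⟫ * Y i * h0) :=
      funext hℓ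
    rw [heq]
    refine continuous_const.mul (continuous_finset_sum _ fun i _ => ?_)
    have hi : Continuous fun β : EuclideanSpace ℝ (Fin p) => ⟪X i, β⟫ :=
      (innerSL ℝ (X i)).continuous
    exact (continuous_const.add hi).sub
      (((Real.continuous_exp.comp hi).mul continuous_const).mul continuous_const)
  -- upper bound on ℓ
  set A : ℝ := Real.log h0 + (1/(M:ℝ)) * ∑ i, 4/(Y i * h0) with hA
  have hbound : ∀ β, ℓ β ≤ A - c1 * ‖β‖ := by
    intro β
    have h1 : ∀ i : Fin M, Real.log h0 + ⟪X i, β⟫ - Real.exp ⟪X i, β⟫ * Y i * h0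
        ≤ Real.log h0 + 4/(Y i * h0) - |⟪X i, β⟫| := by
      intro i
      have hk := cox_key (Y i * h0) ⟪X i, β⟫ (mul_pos (hY i) hh0)
      have hmm : Real.exp ⟪X i, β⟫ * Y i * h0 = Real.exp ⟪X i, β⟫ * (Y i * h0) := by ring
      rw [hmm]; linarith
    have h2 : ℓ β ≤ (1/(M:ℝ)) * ∑ i, (Real.log h0 + 4/(Y i * h0) - |⟪X i, β⟫|) := by
      rw [hℓ]
      exact mul_le_mul_of_nonneg_left (Finset.sum_le_sum fun i _ => h1 i) (by positivity)
    have h3 : ∑ i : Fin M, (Real.log h0 + 4/(Y i * h0) - |⟪X i, β⟫|)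
        = (M : ℝ) * Real.log h0 + (∑ i, 4/(Y i * h0)) - ∑ i, |⟪X i, β⟫| := by
      rw [Finset.sum_sub_distrib, Finset.sum_add_distrib, Finset.sum_const, Finset.card_univ,
        Fintype.card_fin, nsmul_eq_mul]
    have h4 := hnr β
    rw [h3] at h2
    have h5 : (1/(M:ℝ)) * ((M:ℝ) * Real.log h0 + (∑ i, 4/(Y i*h0)) - ∑ i, |⟪X i, β⟫|)
        = Real.log h0 + (1/(M:ℝ)) * (∑ i, 4/(Y i*h0)) - (1/(M:ℝ)) * ∑ i, |⟪X i, β⟫| := by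
      rw [mul_sub, mul_add, ← mul_assoc, one_div_mul_cancel hM0.ne', one_mul]
    rw [h5] at h2
    rw [hA]; linarith
  have hbddA : ∀ β, ℓ β ≤ A := fun β => by
    have := hbound β
    nlinarith [norm_nonneg β, hc1.le]
  have hbdd : BddAbove (Set.range ℓ) := ⟨A, by rintro _ ⟨β, rfl⟩; exact hbddA β⟩
  have hκ_le : ∀ β, ℓ β ≤ κ := fun β => hκ ▸ le_ciSup hbdd β
  set B : ℝ := A - ℓ 0 with hB
  have hB0 : 0 ≤ B := by have := hbddA 0; simp only [hB]; linarith
  have hden : (0:ℝ) < 1 + 2*γ*B := by nlinarith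
  set θ : ℝ := 1/(1 + 2*γ*B) with hθ
  have hθpos : 0 < θ := by positivity
  have hθ1 : θ ≤ 1 := by rw [hθ, div_le_one hden]; nlinarith
  have hθB : θ * B ≤ 1/(2*γ) := by
    rw [hθ, div_mul_eq_mul_div, div_le_div_iff₀ hden (by positivity)]
    nlinarith
  have hcomb : ∀ β, ℓ β - κ ≤ θ * (B - c1 * ‖β‖) := by
    intro β
    rcases le_or_gt 0 (B - c1*‖β‖) with h | h
    · have := hκ_le β; nlinarith
    · have h6 : ℓ β - κ ≤ B - c1*‖β‖ := by
        have h7 := hbound β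
        have h8 := hκ_le 0
        simp only [hB]; linarith
      nlinarith
  clear_value A B θ
  set a : ℝ := (p:ℝ) + α with ha
  have ha0 : 0 < a := by positivity
  -- pointwise domination
  have hdom : ∀ q : ℝ × EuclideanSpace ℝ (Fin p),
      q ∈ Set.Ioi (0:ℝ) ×ˢ (Set.univ : Set (EuclideanSpace ℝ (Fin p))) →
      ‖q.1 ^ (a - 1) * Real.exp (-q.1 * (κ + 1 / γ)) * Real.exp (q.1 * ℓ q.2)‖
        ≤ q.1 ^ (a-1) * Real.exp (-((1/(2*γ) + θ*c1*‖q.2‖) * q.1)) := by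
    rintro ⟨τ, β⟩ ⟨hτ, -⟩
    have hτ0 : (0:ℝ) < τ := hτ
    have hnn : 0 ≤ τ ^ (a - 1) := Real.rpow_nonneg hτ0.le _
    rw [norm_of_nonneg (by positivity)]
    have hexp : Real.exp (-τ * (κ + 1 / γ)) * Real.exp (τ * ℓ β)
        = Real.exp (-τ * (κ + 1/γ) + τ * ℓ β) := (Real.exp_add _ _).symm
    show τ ^ (a-1) * Real.exp (-τ * (κ + 1/γ)) * Real.exp (τ * ℓ β) ≤ _
    rw [mul_assoc, hexp]
    refine mul_le_mul_of_nonneg_left (Real.exp_le_exp.mpr ?_) hnn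
    have h1 : τ * (ℓ β - κ) ≤ τ * (θ * (B - c1 * ‖β‖)) :=
      mul_le_mul_of_nonneg_left (hcomb β) hτ0.le
    have h2 : τ * (θ * B) ≤ τ * (1/(2*γ)) := mul_le_mul_of_nonneg_left hθB hτ0.le
    have hγ2 : τ * (1/γ) = 2*(τ*(1/(2*γ))) := by
      field_simp
    have h3 : -τ * (κ + 1/γ) + τ * ℓ β = τ*(ℓ β - κ) - τ*(1/γ) := by ring
    have h4 : τ*(θ*(B - c1*‖β‖)) = τ*(θ*B) - θ*c1*‖β‖*τ := by ring
    have h5 : -((1/(2*γ) + θ*c1*‖β‖) * τ) = -(τ*(1/(2*γ))) - θ*c1*‖β‖*τ := by ring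
    rw [h3, h5]
    linarith [h1, h2, hγ2, h4]
  -- measurability of the integrand
  have hsetmeas : MeasurableSet (Set.Ioi (0:ℝ) ×ˢ (Set.univ : Set (EuclideanSpace ℝ (Fin p)))) :=
    measurableSet_Ioi.prod MeasurableSet.univ
  have hfmeas : AEStronglyMeasurable
      (fun q : ℝ × EuclideanSpace ℝ (Fin p) =>
        q.1 ^ ((p : ℝ) + α - 1) * Real.exp (-q.1 * (κ + 1 / γ)) * Real.exp (q.1 * ℓ q.2))
      (volume.restrict (Set.Ioi (0:ℝ) ×ˢ (Set.univ : Set (EuclideanSpace ℝ (Fin p))))) := by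
    apply Measurable.aestronglyMeasurable
    have hℓm : Measurable ℓ := hℓc.measurable
    fun_prop
  -- assemble
  have hFon : IntegrableOn
      (fun q : ℝ × EuclideanSpace ℝ (Fin p) =>
        q.1 ^ (a-1) * Real.exp (-((1/(2*γ) + θ*c1*‖q.2‖) * q.1)))
      (Set.Ioi (0:ℝ) ×ˢ (Set.univ : Set (EuclideanSpace ℝ (Fin p)))) := by
    refine cox_F_on p a (1/(2*γ)) (θ*c1) ?_ (by positivity) (by positivity)
    rw [ha]; linarith
  refine Integrable.mono' hFon hfmeas ?_
  filter_upwards [self_mem_ae_restrict hsetmeas] with q hq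
  exact hdom q hq
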